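/- Let F be a field, k ≥ 1 a natural number, and G a k²×k² matrix over F, with rows and columns indexed by pairs (i,s) ∈ {1,...,k}×{1,...,k}, such that every square submatrix of G is invertible. Let m, m' : {1,...,k}×{1,...,k} → F be message vectors and set p = Gm, p' = Gm'. Let S, T be subsets of {1,...,k} with |S| + |T| = k. If m(j,s) = m'(j,s) for all j ∈ S and all s ∈ {1,...,k}, and p(j,s) = p'(j,s) for all j ∈ T and all s ∈ {1,...,k}, then m = m'. (In other words, in the clustered code where each of the 2k nodes stores either a message block m_j or a parity block p_j of k symbols, a data collector contacting any k of the 2k nodes recovers the full file of M = k² message symbols; i.e., the code has the MDS property.) -/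
import Mathlib


/-- Every square submatrix of `G` is invertible: for every size `r` and every
injective choice of `r` rows and `r` columns, the corresponding `r × r`
submatrix has nonzero determinant. -/
def AllSquareSubmatricesInvertible {F : Type*} [Field F] {ι : Type*} [DecidableEq ι]
    (G : Matrix ι ι F) : Prop :=
  ∀ (r : ℕ) (f g : Fin r → ι), Function.Injective f → Function.Injective g →
    (G.submatrix f g).det ≠ 0

/-- Data reconstruction (MDS property) of Construction 1 for the `[2k,k,2]`
clustered DSS: a data collector contacting the message blocks indexed by `S`
and the parity blocks indexed by `T`, with `|S| + |T| = k`, recovers the full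
file of `k²` message symbols. -/
theorem data_reconstruction_MDS
    {F : Type*} [Field F] {k : ℕ} (hk : 1 ≤ k)
    (G : Matrix (Fin k × Fin k) (Fin k × Fin k) F)
    (hG : AllSquareSubmatricesInvertible G)
    (m m' : Fin k × Fin k → F)
    (p p' : Fin k × Fin k → F)
    (hp : p = G.mulVec m) (hp' : p' = G.mulVec m')
    (S T : Finset (Fin k))
    (hST : S.card + T.card = k)
    (hmsg : ∀ j ∈ S, ∀ s : Fin k, m (j, s) = m' (j, s))
    (hpar : ∀ j ∈ T, ∀ s : Fin k, p (j, s) = p' (j, s)) :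
    m = m' := by
  classical
  -- the difference vector
  set d : Fin k × Fin k → F := fun c => m c - m' c with hd
  have hdS : ∀ c : Fin k × Fin k, c.1 ∈ S → d c = 0 := by
    rintro ⟨j, s⟩ hj
    simp [hd, sub_eq_zero, hmsg j hj s]
  -- rows in T annihilate d
  have hrow : ∀ r : Fin k × Fin k, r.1 ∈ T →
      (∑ c : Fin k × Fin k, G r c * d c) = 0 := by
    rintro ⟨j, s⟩ hj
    have h1 : G.mulVec m (j, s) = G.mulVec m' (j, s) := by
      rw [← hp, ← hp']; exact hpar j hj s
    simp only [Matrix.mulVec, dotProduct] at h1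
    simp only [hd, mul_sub, Finset.sum_sub_distrib, h1, sub_self]
  -- index types
  let ιC := {c : Fin k × Fin k // c.1 ∉ S}
  let ιR := {c : Fin k × Fin k // c.1 ∈ T}
  have hcardC : Fintype.card ιC = (k - S.card) * k := by
    rw [Fintype.card_subtype]
    have : (Finset.univ.filter fun c : Fin k × Fin k => c.1 ∉ S) = Sᶜ ×ˢ Finset.univ := by
      ext c; simp
    rw [this, Finset.card_product, Finset.card_compl]
    simp [Fintype.card_fin]
  have hcardR : Fintype.card ιR = T.card * k := by
    rw [Fintype.card_subtype]
    have : (Finset.univ.filter fun c : Fin k × Fin k => c.1 ∈ T) = T ×ˢ Finset.univ := by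
      ext c; simp
    rw [this, Finset.card_product]
    simp [Fintype.card_fin]
  have hSk : S.card ≤ k := by omega
  have hcard : Fintype.card ιC = Fintype.card ιR := by
    rw [hcardC, hcardR]
    congr 1
    omega
  let e : ιC ≃ ιR := Fintype.equivOfCardEq hcard
  let M : Matrix ιC ιC F := fun i j => G (e i).val j.val
  -- det M ≠ 0
  have hdet : M.det ≠ 0 := by
    let eq := (Fintype.equivFin ιC).symm
    have hf : Function.Injective (fun a => ((e (eq a)).val : Fin k × Fin k)) :=
      Subtype.val_injective.comp (e.injective.comp eq.injective)
    have hg : Function.Injective (fun a => ((eq a).val : Fin k × Fin k)) :=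
      Subtype.val_injective.comp eq.injective
    have h := hG (Fintype.card ιC) _ _ hf hg
    have heq : G.submatrix (fun a => ((e (eq a)).val : Fin k × Fin k))
        (fun a => ((eq a).val : Fin k × Fin k)) = M.submatrix eq eq := rfl
    rw [heq, Matrix.det_submatrix_equiv_self] at h
    exact h
  -- restricted vector
  let x : ιC → F := fun j => d j.val
  have hx : M.mulVec x = 0 := by
    funext i
    have hiT : ((e i).val).1 ∈ T := (e i).property
    have h0 := hrow (e i).val hiT
    -- split sum over all columns
    have hsplit : (∑ c : Fin k × Fin k, G (e i).val c * d c)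
        = ∑ c ∈ Finset.univ.filter (fun c : Fin k × Fin k => c.1 ∉ S),
            G (e i).val c * d c := by
      rw [Finset.sum_filter]
      apply Finset.sum_congr rfl
      intro c _
      by_cases hc : c.1 ∈ S
      · simp [hc, hdS c hc]
      · simp [hc]
    have hsub : (∑ c ∈ Finset.univ.filter (fun c : Fin k × Fin k => c.1 ∉ S),
        G (e i).val c * d c) = ∑ j : ιC, G (e i).val j.val * d j.val := by
      exact Finset.sum_subtype _ (by intro c; simp) _
    simp only [Matrix.mulVec, dotProduct, Pi.zero_apply]
    rw [← hsub, ← hsplit]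
    exact h0
  have hx0 : x = 0 := Matrix.eq_zero_of_mulVec_eq_zero hdet hx
  funext c
  rw [← sub_eq_zero]
  by_cases hc : c.1 ∈ S
  · exact hdS c hc
  · exact congrFun hx0 ⟨c, hc⟩
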